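/- Under the adaptive stopping criterion h_t(x_{t+1}) ≤ φ(x_t) - ⟨∇h_t(x_{t+1}), x_{t+1} - v_{t+1}⟩ for all t = 0,...,T (with v_{t+1} a Frank-Wolfe vertex of ∇h_t(x_{t+1}) over P), the minimum DC gap satisfies min_{0≤t≤T} G(x_t) ≤ 2(φ(x_0) - φ(x*))/(T+1). -/

import Mathlib

open RealInnerProductSpace

lemma grad_ineq {n : ℕ} {F : EuclideanSpace ℝ (Fin n) → ℝ}
    (hF : ConvexOn ℝ Set.univ F) (hFd : Differentiable ℝ F)
    (a b : EuclideanSpace ℝ (Fin n)) :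
    F a + ⟪gradient F a, b - a⟫ ≤ F b := by
  set q : ℝ → ℝ := fun s => F (a + s • (b - a)) with hq
  have hconv : ConvexOn ℝ Set.univ q := by
    have h := hF.comp_affineMap
      (AffineMap.const ℝ ℝ a + (LinearMap.toSpanSingleton ℝ _ (b - a)).toAffineMap)
    have he : q = F ∘ (AffineMap.const ℝ ℝ a + (LinearMap.toSpanSingleton ℝ _ (b - a)).toAffineMap) := by
      funext s; simp [q, LinearMap.toSpanSingleton_apply]
    rw [he]
    simpa using h
  have hline : HasDerivAt (fun s : ℝ => a + s • (b - a)) (b - a) 0 := by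
    simpa using ((hasDerivAt_id (0:ℝ)).smul_const (b - a)).const_add a
  have hderiv : HasDerivAt q ⟪gradient F a, b - a⟫ 0 := by
    have h2 : HasFDerivAt F (fderiv ℝ F a) a := (hFd a).hasFDerivAt
    have h3 : HasFDerivAt F (fderiv ℝ F a) ((fun s : ℝ => a + s • (b - a)) 0) := by
      simpa using h2
    have := h3.comp_hasDerivAt 0 hline
    have hval : fderiv ℝ F a (b - a) = ⟪gradient F a, b - a⟫ := by
      have := (hFd a).hasGradientAt.hasFDerivAt
      rw [this.fderiv]
      simp [InnerProductSpace.toDual_apply_apply]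
    rw [hval] at this; exact this
  have := hconv.le_slope_of_hasDerivAt (Set.mem_univ (0:ℝ)) (Set.mem_univ (1:ℝ)) one_pos hderiv
  have hq0 : q 0 = F a := by simp [q]
  have hq1 : q 1 = F b := by simp [q]
  rw [slope_def_field] at this
  rw [hq0, hq1, sub_zero, div_one] at this
  linarith

/-- Adaptive-error DCA converges: `min_{0≤t≤T} G(x_t) ≤ 2(φ(x₀)-φ(x*))/(T+1)`. -/
theorem stmt6 {n : ℕ} (P : Set (EuclideanSpace ℝ (Fin n)))
    (hPc : IsCompact P) (hPconv : Convex ℝ P)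
    (f g : EuclideanSpace ℝ (Fin n) → ℝ)
    (hf : ConvexOn ℝ Set.univ f) (hfd : Differentiable ℝ f)
    (hg : ConvexOn ℝ Set.univ g) (hgd : Differentiable ℝ g)
    (T : ℕ) (x : ℕ → EuclideanSpace ℝ (Fin n))
    (hxP : ∀ t ≤ T + 1, x t ∈ P)
    (φ : EuclideanSpace ℝ (Fin n) → ℝ)
    (hφ : ∀ y, φ y = f y - g y)
    (ht : ℕ → EuclideanSpace ℝ (Fin n) → ℝ)
    (hht : ∀ t y, ht t y = f y - g (x t) - ⟪gradient g (x t), y - x t⟫)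
    (v : ℕ → EuclideanSpace ℝ (Fin n))
    (hv : ∀ t ≤ T, v (t + 1) ∈ P ∧ ∀ w ∈ P,
      ⟪gradient (ht t) (x (t + 1)), x (t + 1) - w⟫ ≤
        ⟪gradient (ht t) (x (t + 1)), x (t + 1) - v (t + 1)⟫)
    (hcrit : ∀ t ≤ T, ht t (x (t + 1)) ≤
      φ (x t) - ⟪gradient (ht t) (x (t + 1)), x (t + 1) - v (t + 1)⟫)
    (G : ℕ → ℝ)
    (hG : ∀ t ≤ T, IsGreatest ((fun y => φ (x t) - ht t y) '' P) (G t))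
    (xstar : EuclideanSpace ℝ (Fin n))
    (hstar : xstar ∈ P ∧ ∀ y ∈ P, φ xstar ≤ φ y) :
    ∃ t ≤ T, G t ≤ 2 * (φ (x 0) - φ xstar) / (T + 1 : ℝ) := by
  by_contra hcon
  push_neg at hcon
  -- key per-step bound
  have key : ∀ t ≤ T, G t ≤ 2 * (φ (x t) - φ (x (t + 1))) := by
    intro t htT
    set c := gradient g (x t) with hc
    -- ht t is convex and differentiable
    have hhtconv : ConvexOn ℝ Set.univ (ht t) := by
      constructor
      · exact convex_univ
      · intro p _ q _ α β hα hβ hαβ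
        have hfc := hf.2 (Set.mem_univ p) (Set.mem_univ q) hα hβ hαβ
        simp only [smul_eq_mul] at hfc
        simp only [hht]
        rw [inner_sub_right, inner_sub_right, inner_sub_right, inner_add_right,
          inner_smul_right, inner_smul_right]
        have hc1 : α * g (x t) + β * g (x t) = g (x t) := by
          rw [← add_mul, hαβ, one_mul]
        have hc2 : α * ⟪c, x t⟫ + β * ⟪c, x t⟫ = ⟪c, x t⟫ := by
          rw [← add_mul, hαβ, one_mul]
        simp only [smul_eq_mul]
        nlinarith [hfc]
    have hhtd : Differentiable ℝ (ht t) := by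
      have : (ht t) = fun y => f y - g (x t) - ⟪c, y - x t⟫ := funext fun y => hht t y
      rw [this]
      exact ((hfd.sub_const _).sub
        (Differentiable.inner (𝕜 := ℝ) (differentiable_const c)
          (differentiable_id.sub_const (x t))))
    set d := gradient (ht t) (x (t + 1)) with hd
    set D := ⟪d, x (t + 1) - v (t + 1)⟫ with hD
    -- G t realized by some w ∈ P
    obtain ⟨w, hwP, hwG⟩ := (hG t htT).1
    -- convexity inequality for ht t at x (t+1)
    have h1 : ht t (x (t + 1)) + ⟪d, w - x (t + 1)⟫ ≤ ht t w :=
      grad_ineq hhtconv hhtd (x (t + 1)) w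
    have h2 : ⟪d, x (t + 1) - w⟫ ≤ D := (hv t htT).2 w hwP
    have h3 : ⟪d, w - x (t + 1)⟫ = -⟪d, x (t + 1) - w⟫ := by
      rw [← inner_neg_right]; congr 1; abel
    have hGle : G t ≤ φ (x t) - ht t (x (t + 1)) + D := by
      rw [← hwG]; simp only []
      rw [h3] at h1; linarith
    have hDle : D ≤ φ (x t) - ht t (x (t + 1)) := by
      have := hcrit t htT; rw [← hD] at this; linarith
    -- φ (x (t+1)) ≤ ht t (x (t+1))
    have hup : φ (x (t + 1)) ≤ ht t (x (t + 1)) := by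
      have := grad_ineq hg hgd (x t) (x (t + 1))
      rw [hht, hφ]; linarith
    linarith
  -- sum the bounds
  have hsum : ∑ t ∈ Finset.range (T + 1), G t ≤ 2 * (φ (x 0) - φ xstar) := by
    have h1 : ∑ t ∈ Finset.range (T + 1), G t ≤
        ∑ t ∈ Finset.range (T + 1), 2 * (φ (x t) - φ (x (t + 1))) := by
      apply Finset.sum_le_sum
      intro t htmem
      exact key t (Nat.lt_succ_iff.mp (Finset.mem_range.mp htmem))
    have h2 : ∑ t ∈ Finset.range (T + 1), 2 * (φ (x t) - φ (x (t + 1)))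
        = 2 * (φ (x 0) - φ (x (T + 1))) := by
      rw [← Finset.mul_sum, Finset.sum_range_sub' (fun t => φ (x t))]
    have h3 : φ xstar ≤ φ (x (T + 1)) := hstar.2 _ (hxP (T + 1) le_rfl)
    rw [h2] at h1; linarith
  have hlb : (T + 1 : ℝ) * (2 * (φ (x 0) - φ xstar) / (T + 1 : ℝ)) <
      ∑ t ∈ Finset.range (T + 1), G t := by
    have := Finset.sum_lt_sum_of_nonempty (Finset.nonempty_range_iff.mpr (Nat.succ_ne_zero T))
      (f := fun _ => 2 * (φ (x 0) - φ xstar) / (T + 1 : ℝ)) (g := G)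
      (fun t htmem => hcon t (Nat.lt_succ_iff.mp (Finset.mem_range.mp htmem)))
    simpa [Finset.sum_const, Finset.card_range, mul_comm] using this
  have hne : (T + 1 : ℝ) ≠ 0 := by positivity
  rw [mul_div_cancel₀ _ hne] at hlb
  linarith
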